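/- Let p be prime, n ≥ 1, X = ℤ/(pⁿ) × ℤ/(p) × ℤ/(pⁿ), and σ_{(a,b,c)}(x,y,z) = (x−c, y+π(a−x), z−δ_{a,x−c}δ_{b,y+π(a−x)}). The group ⟨σ_{(a,b,c)} : (a,b,c) ∈ X⟩ acts transitively on X, i.e. the solution (X,r) is indecomposable. -/

import Mathlib

/-- The canonical projection `π : ℤ/(pⁿ) → ℤ/(p)`. -/
def projP (p n : ℕ) (x : ZMod (p ^ n)) : ZMod p := (x.val : ZMod p)

/-- `σ_{(a,b,c)}(x,y,z) = (x−c, y+π(a−x), z−δ_{a,x−c}·δ_{b,y+π(a−x)})`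
on `X = ℤ/(pⁿ) × ℤ/(p) × ℤ/(pⁿ)`, with the Kronecker deltas valued in `ℤ/(pⁿ)`. -/
def sigmaPN (p n : ℕ) (a q : ZMod (p ^ n) × ZMod p × ZMod (p ^ n)) :
    ZMod (p ^ n) × ZMod p × ZMod (p ^ n) :=
  (q.1 - a.2.2, q.2.1 + projP p n (a.1 - q.1),
    q.2.2 - (if a.1 = q.1 - a.2.2 then (1 : ZMod (p ^ n)) else 0) *
      (if a.2.1 = q.2.1 + projP p n (a.1 - q.1) then 1 else 0))

/-- `σ⁻¹_{(a,b,c)}(x,y,z) = (x+c, y+π(x+c−a), z+δ_{a,x}·δ_{b,y})`. -/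
def sigmaPNInv (p n : ℕ) (a q : ZMod (p ^ n) × ZMod p × ZMod (p ^ n)) :
    ZMod (p ^ n) × ZMod p × ZMod (p ^ n) :=
  (q.1 + a.2.2, q.2.1 + projP p n (q.1 + a.2.2 - a.1),
    q.2.2 + (if a.1 = q.1 then (1 : ZMod (p ^ n)) else 0) *
      (if a.2.1 = q.2.1 then 1 else 0))

lemma projP_eq (p n : ℕ) (hn : n ≠ 0) [NeZero (p ^ n)] (x : ZMod (p ^ n)) :
    projP p n x = ZMod.castHom (dvd_pow_self p hn) (ZMod p) x := by
  rw [ZMod.castHom_apply, projP, ZMod.natCast_val]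

lemma projP_add_neg (p n : ℕ) (hn : n ≠ 0) [NeZero (p ^ n)] (x y : ZMod (p ^ n))
    (h : x + y = 0) : projP p n x + projP p n y = 0 := by
  rw [projP_eq p n hn, projP_eq p n hn, ← map_add, h, map_zero]

def sigmaEquiv (p n : ℕ) (hn : n ≠ 0) [NeZero (p ^ n)]
    (a : ZMod (p ^ n) × ZMod p × ZMod (p ^ n)) :
    Equiv.Perm (ZMod (p ^ n) × ZMod p × ZMod (p ^ n)) where
  toFun := sigmaPN p n a
  invFun := sigmaPNInv p n a
  left_inv q := by
    obtain ⟨x, y, z⟩ := q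
    obtain ⟨a1, b, c⟩ := a
    simp only [sigmaPN, sigmaPNInv, sub_add_cancel]
    refine Prod.ext rfl (Prod.ext ?_ ?_)
    · show y + projP p n (a1 - x) + projP p n (x - a1) = y
      rw [add_assoc, projP_add_neg p n hn _ _ (by ring), add_zero]
    · show _ = z
      by_cases h1 : a1 = x - c <;> by_cases h2 : b = y + projP p n (a1 - x) <;> simp [h1, h2]
  right_inv q := by
    obtain ⟨x, y, z⟩ := q
    obtain ⟨a1, b, c⟩ := a
    simp only [sigmaPN, sigmaPNInv, add_sub_cancel_right]
    have h1 : projP p n (x + c - a1) + projP p n (a1 - (x + c)) = 0 :=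
      projP_add_neg p n hn _ _ (by ring)
    refine Prod.ext rfl (Prod.ext ?_ ?_)
    · show y + projP p n (x + c - a1) + projP p n (a1 - (x + c)) = y
      rw [add_assoc, h1, add_zero]
    · show z + _ - _ = z
      simp only [show y + projP p n (x + c - a1) + projP p n (a1 - (x + c)) = y by
        rw [add_assoc, h1, add_zero]]
      ring


/-- The permutation group `⟨σ_{(a,b,c)}⟩` acts transitively on `X`:
the solution `(X,r)` is indecomposable. -/
theorem sigmaPN_indecomposable (p n : ℕ) (hp : p.Prime) (hn : 1 ≤ n) :
    ∀ u v : ZMod (p ^ n) × ZMod p × ZMod (p ^ n),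
      ∃ g ∈ Subgroup.closure
          {g : Equiv.Perm (ZMod (p ^ n) × ZMod p × ZMod (p ^ n)) |
            ∃ a, ∀ q, g q = sigmaPN p n a q},
        g u = v := by
  haveI : NeZero (p ^ n) := ⟨pow_ne_zero n hp.pos.ne'⟩
  haveI : NeZero p := ⟨hp.pos.ne'⟩
  haveI : Fact (1 < p ^ n) := ⟨one_lt_pow₀ hp.one_lt (by omega)⟩
  have hn' : n ≠ 0 := by omega
  set S : Set (Equiv.Perm (ZMod (p ^ n) × ZMod p × ZMod (p ^ n))) :=
    {g | ∃ a, ∀ q, g q = sigmaPN p n a q} with hS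
  set cl := Subgroup.closure S with hcl
  -- basic combinators
  have hrefl : ∀ u, ∃ g ∈ cl, g u = u := fun u => ⟨1, one_mem cl, rfl⟩
  have htrans : ∀ u v w, (∃ g ∈ cl, g u = v) → (∃ g ∈ cl, g v = w) →
      ∃ g ∈ cl, g u = w := by
    rintro u v w ⟨g, hg, rfl⟩ ⟨g', hg', rfl⟩
    exact ⟨g' * g, mul_mem hg' hg, rfl⟩
  have hstep : ∀ a u, ∃ g ∈ cl, g u = sigmaPN p n a u := fun a u =>
    ⟨sigmaEquiv p n hn' a, Subgroup.subset_closure ⟨a, fun q => rfl⟩, rfl⟩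
  have hone : (1 : ZMod (p ^ n)) ≠ 0 := one_ne_zero
  have hproj0 : projP p n 0 = 0 := by rw [projP_eq p n hn', map_zero]
  have hproj1 : projP p n 1 = 1 := by rw [projP_eq p n hn', map_one]
  -- change x
  have stepX : ∀ x x' y z, ∃ g ∈ cl, g (x, y, z) = (x', y, z) := by
    intro x x' y z
    by_cases hx : x' = x
    · subst hx; exact hrefl _
    · obtain ⟨g, hg, hgu⟩ := hstep (x, 0, x - x') (x, y, z)
      refine ⟨g, hg, ?_⟩
      rw [hgu]
      simp only [sigmaPN, sub_sub_cancel, sub_self, hproj0, add_zero]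
      rw [if_neg (fun h => hx h.symm), zero_mul, sub_zero]
  -- change y by one
  have stepY1 : ∀ x y z, ∃ g ∈ cl, g (x, y, z) = (x, y + 1, z) := by
    intro x y z
    obtain ⟨g, hg, hgu⟩ := hstep (x + 1, 0, 0) (x, y, z)
    refine ⟨g, hg, ?_⟩
    rw [hgu]
    simp only [sigmaPN, sub_zero, add_sub_cancel_left, hproj1]
    rw [if_neg (fun h => hone (by linear_combination h)), zero_mul, sub_zero]
  have stepY : ∀ x y z (k : ℕ), ∃ g ∈ cl, g (x, y, z) = (x, y + k, z) := by
    intro x y z k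
    induction k with
    | zero => simpa using hrefl (x, y, z)
    | succ m ih =>
      refine htrans _ (x, y + m, z) _ ih ?_
      have := stepY1 x (y + m) z
      rwa [show y + (m:ZMod p) + 1 = y + ((m+1 : ℕ) : ZMod p) by push_cast; ring] at this
  -- change z by one (downwards)
  have stepZ1 : ∀ x y z, ∃ g ∈ cl, g (x, y, z) = (x, y, z - 1) := by
    intro x y z
    obtain ⟨g, hg, hgu⟩ := hstep (x, y, 0) (x, y, z)
    refine ⟨g, hg, ?_⟩
    rw [hgu]
    simp only [sigmaPN, sub_zero, sub_self, hproj0, add_zero, if_pos rfl, one_mul, if_true, mul_one]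
  have stepZ : ∀ x y z (k : ℕ), ∃ g ∈ cl, g (x, y, z) = (x, y, z - k) := by
    intro x y z k
    induction k with
    | zero => simpa using hrefl (x, y, z)
    | succ m ih =>
      refine htrans _ (x, y, z - m) _ ih ?_
      have := stepZ1 x y (z - m)
      rwa [show z - (m:ZMod (p^n)) - 1 = z - ((m+1 : ℕ) : ZMod (p^n)) by push_cast; ring] at this
  rintro ⟨x, y, z⟩ ⟨x', y', z'⟩
  refine htrans _ (x', y, z) _ (stepX x x' y z) (htrans _ (x', y', z) _ ?_ ?_)
  · have := stepY x' y z (y' - y).val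
    rwa [show y + ((y' - y).val : ZMod p) = y' by
      rw [ZMod.natCast_val, ZMod.cast_id]; ring] at this
  · have := stepZ x' y' z (z - z').val
    rwa [show z - ((z - z').val : ZMod (p^n)) = z' by
      rw [ZMod.natCast_val, ZMod.cast_id]; ring] at this
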